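/- Let (R_n)_{n≥1} be a nondecreasing sequence of nonnegative reals with R_n ≤ c·n for some constant c > 0, and define R^λ = (1 − e^{−λ}) · Σ_{n=1}^∞ e^{−nλ} R_n. Then liminf_{λ→0⁺} R^λ / log(1/λ) ≥ liminf_{T→∞} R_T / log T. In particular, any asymptotic lower bound of the form liminf_{T→∞} R_T / log T ≥ L transfers to liminf_{λ→0⁺} R^λ / log(1/λ) ≥ L. -/

import Mathlib

open Filter Real

/-- The discounted aggregate `R^lam = (1 - e^{-lam}) * sum_{n>=1} e^{-n lam} R_n`. -/
noncomputable def discountedAggregate (R : ℕ → ℝ) (lam : ℝ) : ℝ :=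
  (1 - Real.exp (-lam)) * ∑' n : ℕ, Real.exp (-((n : ℝ) + 1) * lam) * R (n + 1)

lemma term_eq (R : ℕ → ℝ) (lam : ℝ) (n : ℕ) :
    Real.exp (-((n : ℝ) + 1) * lam) * R (n + 1)
      = Real.exp (-lam) ^ (n + 1) * R (n + 1) := by
  rw [← Real.exp_nat_mul]
  push_cast
  ring_nf

lemma summable_terms (R : ℕ → ℝ) (c : ℝ)
    (hnonneg : ∀ n : ℕ, 1 ≤ n → 0 ≤ R n)
    (hlin : ∀ n : ℕ, 1 ≤ n → R n ≤ c * n) {lam : ℝ} (hlam : 0 < lam) :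
    Summable (fun n : ℕ => Real.exp (-((n : ℝ) + 1) * lam) * R (n + 1)) := by
  have hr0 : (0:ℝ) ≤ Real.exp (-lam) := (Real.exp_pos _).le
  have hr1 : Real.exp (-lam) < 1 := Real.exp_lt_one_iff.2 (by linarith)
  have hs : Summable (fun n : ℕ => c * ((((n:ℝ)+1)) * Real.exp (-lam) ^ (n + 1))) := by
    apply Summable.mul_left
    have h := (summable_nat_add_iff (f := fun n : ℕ => (n:ℝ) * Real.exp (-lam) ^ n) 1).2 ?_
    · convert h using 2 with n
      · rfl
      · push_cast; ring
    · simpa using summable_pow_mul_geometric_of_norm_lt_one 1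
        (r := Real.exp (-lam)) (by rwa [Real.norm_eq_abs, abs_of_nonneg hr0])
  apply Summable.of_nonneg_of_le _ _ hs
  · intro n
    exact mul_nonneg (Real.exp_pos _).le (hnonneg _ (Nat.le_add_left 1 n))
  · intro n
    rw [term_eq]
    have h1 : R (n+1) ≤ c * (n+1) := by
      have := hlin (n+1) (Nat.le_add_left 1 n); push_cast at this ⊢; linarith
    have h2 : (0:ℝ) ≤ Real.exp (-lam) ^ (n+1) := pow_nonneg hr0 _
    calc Real.exp (-lam) ^ (n + 1) * R (n + 1)
        ≤ Real.exp (-lam) ^ (n + 1) * (c * (n+1)) := by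
          apply mul_le_mul_of_nonneg_left _ h2
          push_cast; exact_mod_cast h1
      _ = c * ((((n:ℝ)+1)) * Real.exp (-lam) ^ (n + 1)) := by ring

lemma key_bound (R : ℕ → ℝ) (c : ℝ)
    (hnonneg : ∀ n : ℕ, 1 ≤ n → 0 ≤ R n)
    (hmono : ∀ m n : ℕ, 1 ≤ m → m ≤ n → R m ≤ R n)
    (hlin : ∀ n : ℕ, 1 ≤ n → R n ≤ c * n) {lam : ℝ} (hlam : 0 < lam)
    {T : ℕ} (hT : 1 ≤ T) :
    Real.exp (-(T:ℝ) * lam) * R T ≤ discountedAggregate R lam := by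
  set r := Real.exp (-lam) with hr
  have hr0 : (0:ℝ) ≤ r := (Real.exp_pos _).le
  have hr1 : r < 1 := Real.exp_lt_one_iff.2 (by linarith)
  have hsumf := summable_terms R c hnonneg hlin hlam
  have hsumg : Summable (fun n : ℕ => r ^ (n + T) * R T) := by
    apply Summable.mul_right
    simpa [pow_add] using (summable_geometric_of_lt_one hr0 hr1).mul_right (r ^ T)
  -- tsum g ≤ tsum f
  have hle : (∑' n : ℕ, r ^ (n + T) * R T)
      ≤ ∑' n : ℕ, Real.exp (-((n : ℝ) + 1) * lam) * R (n + 1) := by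
    apply Summable.tsum_le_tsum_of_inj (fun n => n + (T - 1))
      (add_left_injective (T - 1))
    · intro m _
      exact mul_nonneg (Real.exp_pos _).le (hnonneg _ (Nat.le_add_left 1 m))
    · intro n
      rw [term_eq]
      have hidx : n + (T - 1) + 1 = n + T := by omega
      rw [hidx]
      apply mul_le_mul_of_nonneg_left _ (pow_nonneg hr0 _)
      exact hmono T (n + T) hT (by omega)
    · exact hsumg
    · exact hsumf
  have htsumg : (∑' n : ℕ, r ^ (n + T) * R T) = (1 - r)⁻¹ * (r ^ T * R T) := by
    have : (∑' n : ℕ, r ^ (n + T) * R T) = (∑' n : ℕ, r ^ n) * (r ^ T * R T) := by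
      rw [← tsum_mul_right]
      congr 1 with n
      rw [pow_add]; ring
    rw [this, tsum_geometric_of_lt_one hr0 hr1]
  have hrT : r ^ T = Real.exp (-(T:ℝ) * lam) := by
    rw [hr, ← Real.exp_nat_mul]; ring_nf
  have h1r : 0 < 1 - r := by linarith
  calc Real.exp (-(T:ℝ) * lam) * R T = (1 - r) * ((1 - r)⁻¹ * (r ^ T * R T)) := by
        rw [← hrT]; field_simp
    _ = (1 - r) * (∑' n : ℕ, r ^ (n + T) * R T) := by rw [htsumg]
    _ ≤ discountedAggregate R lam := by
        unfold discountedAggregate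
        exact mul_le_mul_of_nonneg_left hle h1r.le

lemma disc_nonneg (R : ℕ → ℝ) (hnonneg : ∀ n : ℕ, 1 ≤ n → 0 ≤ R n)
    {lam : ℝ} (hlam : 0 < lam) : 0 ≤ discountedAggregate R lam := by
  unfold discountedAggregate
  apply mul_nonneg
  · have : Real.exp (-lam) ≤ 1 := Real.exp_le_one_iff.2 (by linarith)
    linarith
  · apply tsum_nonneg
    intro n
    exact mul_nonneg (Real.exp_pos _).le (hnonneg _ (Nat.le_add_left 1 n))

lemma rpow_tendsto_atTop {e : ℝ} (he : e < 0) :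
    Tendsto (fun lam : ℝ => lam ^ e) (nhdsWithin 0 (Set.Ioi 0)) atTop := by
  have h1 : Tendsto (fun lam : ℝ => e * Real.log lam) (nhdsWithin 0 (Set.Ioi 0)) atTop :=
    (tendsto_const_mul_atTop_of_neg he).2 Real.tendsto_log_nhdsGT_zero
  have h2 := Real.tendsto_exp_atTop.comp h1
  apply h2.congr'
  filter_upwards [eventually_mem_nhdsWithin] with lam (hl : lam ∈ Set.Ioi 0)
  simp only [Function.comp]
  rw [Real.rpow_def_of_pos hl, mul_comm]

lemma rpow_tendsto_zero {e : ℝ} (he : 0 < e) :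
    Tendsto (fun lam : ℝ => lam ^ e) (nhdsWithin 0 (Set.Ioi 0)) (nhds 0) := by
  have h1 : Tendsto (fun lam : ℝ => e * Real.log lam) (nhdsWithin 0 (Set.Ioi 0)) atBot :=
    (tendsto_const_mul_atBot_of_pos he).2 Real.tendsto_log_nhdsGT_zero
  have h2 := Real.tendsto_exp_atBot.comp h1
  apply h2.congr'
  filter_upwards [eventually_mem_nhdsWithin] with lam (hl : lam ∈ Set.Ioi 0)
  simp only [Function.comp]
  rw [Real.rpow_def_of_pos hl, mul_comm]

lemma aux_z (R : ℕ → ℝ) (c : ℝ) (hc : 0 < c)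
    (hnonneg : ∀ n : ℕ, 1 ≤ n → 0 ≤ R n)
    (hmono : ∀ m n : ℕ, 1 ≤ m → m ≤ n → R m ≤ R n)
    (hlin : ∀ n : ℕ, 1 ≤ n → R n ≤ c * n) (z : ℝ)
    (hz : (z : EReal) < liminf (fun T : ℕ => ((R T / Real.log T : ℝ) : EReal)) atTop) :
    (z : EReal) ≤
      liminf
        (fun lam : ℝ => ((discountedAggregate R lam / Real.log (1 / lam) : ℝ) : EReal))
        (nhdsWithin 0 (Set.Ioi 0)) := by
  have hlam_pos : ∀ᶠ lam in nhdsWithin (0:ℝ) (Set.Ioi 0), 0 < lam := eventually_mem_nhdsWithin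
  have hlam_lt1 : ∀ᶠ lam in nhdsWithin (0:ℝ) (Set.Ioi 0), lam < 1 :=
    (eventually_lt_nhds (by norm_num : (0:ℝ) < 1)).filter_mono nhdsWithin_le_nhds
  by_cases hz0 : z ≤ 0
  · -- liminf ≥ 0 ≥ z
    refine le_liminf_of_le (by isBoundedDefault) ?_
    filter_upwards [hlam_pos, hlam_lt1] with lam hl hl1
    have hL0 : 0 < Real.log (1 / lam) := Real.log_pos (by
      rw [lt_div_iff₀ hl]; linarith)
    have : (0:ℝ) ≤ discountedAggregate R lam / Real.log (1 / lam) :=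
      div_nonneg (disc_nonneg R hnonneg hl) hL0.le
    calc (z : EReal) ≤ ((0:ℝ) : EReal) := EReal.coe_le_coe_iff.2 hz0
      _ ≤ _ := EReal.coe_le_coe_iff.2 this
  · push_neg at hz0
    obtain ⟨x, hzx, hxlim⟩ := EReal.exists_between_coe_real hz
    have hzx' : z < x := EReal.coe_lt_coe_iff.1 hzx
    have hx0 : 0 < x := lt_trans hz0 hzx'
    obtain ⟨N, hN⟩ := eventually_atTop.1 (eventually_lt_of_lt_liminf hxlim)
    set δ : ℝ := (x - z) / (2 * x) with hδdef
    have hδ0 : 0 < δ := div_pos (by linarith) (by linarith)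
    have hδ1 : δ < 1 := by
      rw [div_lt_one (by linarith)]; linarith
    have htarget : z < (1 - δ) * x := by
      have : (1 - δ) * x = x - (x - z) / 2 := by
        rw [hδdef]; field_simp
      rw [this]; linarith
    -- T tends to infinity fast enough
    have hTbig : ∀ᶠ lam in nhdsWithin (0:ℝ) (Set.Ioi 0),
        max (max (N:ℝ) 2) 1 ≤ lam ^ (δ - 1) :=
      (rpow_tendsto_atTop (by linarith)).eventually_ge_atTop _
    -- T lam * lam → 0
    have hTl : Tendsto (fun lam : ℝ => (⌈lam ^ (δ - 1)⌉₊ : ℝ) * lam)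
        (nhdsWithin 0 (Set.Ioi 0)) (nhds 0) := by
      have hupper : Tendsto (fun lam : ℝ => lam ^ δ + lam)
          (nhdsWithin 0 (Set.Ioi 0)) (nhds 0) := by
        have := (rpow_tendsto_zero hδ0).add
          (tendsto_id.mono_left (nhdsWithin_le_nhds (a := (0:ℝ))) :
            Tendsto (fun lam : ℝ => lam) (nhdsWithin 0 (Set.Ioi 0)) (nhds 0))
        simpa using this
      apply tendsto_of_tendsto_of_tendsto_of_le_of_le' tendsto_const_nhds hupper
      · filter_upwards [hlam_pos] with lam hl
        positivity
      · filter_upwards [hlam_pos] with lam hl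
        have h1 : (⌈lam ^ (δ - 1)⌉₊ : ℝ) ≤ lam ^ (δ - 1) + 1 :=
          (Nat.ceil_lt_add_one (Real.rpow_nonneg hl.le _)).le
        have h2 : lam ^ (δ - 1) * lam = lam ^ δ := by
          rw [show lam ^ δ = lam ^ (δ - 1 + 1) by ring_nf, Real.rpow_add hl,
            Real.rpow_one]
        calc (⌈lam ^ (δ - 1)⌉₊ : ℝ) * lam ≤ (lam ^ (δ - 1) + 1) * lam :=
              mul_le_mul_of_nonneg_right h1 hl.le
          _ = lam ^ δ + lam := by rw [add_mul, one_mul, h2]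
    -- the multiplicative factor eventually exceeds z
    have hfac : ∀ᶠ lam in nhdsWithin (0:ℝ) (Set.Ioi 0),
        z < Real.exp (-((⌈lam ^ (δ - 1)⌉₊ : ℝ) * lam)) * ((1 - δ) * x) := by
      have h0 : Tendsto (fun lam : ℝ => -((⌈lam ^ (δ - 1)⌉₊ : ℝ) * lam))
          (nhdsWithin 0 (Set.Ioi 0)) (nhds 0) := by simpa using hTl.neg
      have h1 : Tendsto (fun lam : ℝ => Real.exp (-((⌈lam ^ (δ - 1)⌉₊ : ℝ) * lam)))
          (nhdsWithin 0 (Set.Ioi 0)) (nhds 1) := by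
        simpa [Function.comp_def] using (Real.continuous_exp.tendsto 0).comp h0
      have hcont : Tendsto (fun lam : ℝ =>
          Real.exp (-((⌈lam ^ (δ - 1)⌉₊ : ℝ) * lam)) * ((1 - δ) * x))
          (nhdsWithin 0 (Set.Ioi 0)) (nhds ((1 - δ) * x)) := by
        simpa using h1.mul_const ((1 - δ) * x)
      exact hcont.eventually_const_lt htarget
    refine le_liminf_of_le (by isBoundedDefault) ?_
    filter_upwards [hlam_pos, hlam_lt1, hTbig, hfac] with lam hl hl1 hTb hfc
    set T : ℕ := ⌈lam ^ (δ - 1)⌉₊ with hTdef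
    have hrp : (1:ℝ) ≤ lam ^ (δ - 1) := le_trans (le_max_right _ _) hTb
    have hrpN : max (N:ℝ) 2 ≤ lam ^ (δ - 1) := le_trans (le_max_left _ _) hTb
    have hT1 : 1 ≤ T := by
      have : (1:ℝ) ≤ (T:ℝ) := le_trans hrp (Nat.le_ceil _)
      exact_mod_cast this
    have hTN : N ≤ T := by
      have : (N:ℝ) ≤ (T:ℝ) :=
        le_trans (le_trans (le_max_left _ _) hrpN) (Nat.le_ceil _)
      exact_mod_cast this
    have hT2 : 2 ≤ T := by
      have : (2:ℝ) ≤ (T:ℝ) :=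
        le_trans (le_trans (le_max_right _ _) hrpN) (Nat.le_ceil _)
      exact_mod_cast this
    have hlogT : 0 < Real.log T := Real.log_pos (by exact_mod_cast hT2 : (1:ℝ) < T)
    have hL0 : 0 < Real.log (1 / lam) := Real.log_pos (by rw [lt_div_iff₀ hl]; linarith)
    -- R T ≥ x log T
    have hRT : x * Real.log T ≤ R T := by
      have := hN T hTN
      have hx' : x < R T / Real.log T := EReal.coe_lt_coe_iff.1 this
      have := (lt_div_iff₀ hlogT).1 hx'
      linarith
    -- log T ≥ (1-δ) log(1/lam)
    have hlogT2 : (1 - δ) * Real.log (1 / lam) ≤ Real.log T := by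
      have h1 : Real.log (lam ^ (δ - 1)) ≤ Real.log T :=
        Real.log_le_log (by positivity) (by rw [hTdef]; exact Nat.le_ceil _)
      rw [Real.log_rpow hl] at h1
      have h2 : Real.log (1 / lam) = -Real.log lam := by
        rw [one_div, Real.log_inv]
      rw [h2]
      nlinarith [h1]
    -- combine
    have hkey := key_bound R c hnonneg hmono hlin hl hT1
    have hexp : (0:ℝ) < Real.exp (-(T:ℝ) * lam) := Real.exp_pos _
    have hchain : z * Real.log (1 / lam) ≤ discountedAggregate R lam := by
      have e1 : Real.exp (-(T:ℝ) * lam) * (x * Real.log T) ≤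
          Real.exp (-(T:ℝ) * lam) * R T :=
        mul_le_mul_of_nonneg_left hRT hexp.le
      have e2 : Real.exp (-(T:ℝ) * lam) * (x * ((1 - δ) * Real.log (1 / lam))) ≤
          Real.exp (-(T:ℝ) * lam) * (x * Real.log T) := by
        apply mul_le_mul_of_nonneg_left _ hexp.le
        exact mul_le_mul_of_nonneg_left hlogT2 hx0.le
      have e3 : z * Real.log (1 / lam) ≤
          Real.exp (-(T:ℝ) * lam) * (x * ((1 - δ) * Real.log (1 / lam))) := by
        have : Real.exp (-(T:ℝ) * lam) * (x * ((1 - δ) * Real.log (1 / lam)))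
            = (Real.exp (-((T:ℝ) * lam)) * ((1 - δ) * x)) * Real.log (1 / lam) := by
          ring_nf
        rw [this]
        exact mul_le_mul_of_nonneg_right hfc.le hL0.le
      linarith
    have : z ≤ discountedAggregate R lam / Real.log (1 / lam) :=
      (le_div_iff₀ hL0).2 hchain
    exact EReal.coe_le_coe_iff.2 this

/-- `liminf_{lam→0⁺} R^lam / log(1/lam) ≥ liminf_{T→∞} R_T / log T` (in `EReal`); in
particular any lower bound `L` on the right-hand liminf transfers to the left one. -/
theorem liminf_discounted_ge (R : ℕ → ℝ) (c : ℝ) (hc : 0 < c)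
    (hnonneg : ∀ n : ℕ, 1 ≤ n → 0 ≤ R n)
    (hmono : ∀ m n : ℕ, 1 ≤ m → m ≤ n → R m ≤ R n)
    (hlin : ∀ n : ℕ, 1 ≤ n → R n ≤ c * n) :
    (liminf (fun T : ℕ => ((R T / Real.log T : ℝ) : EReal)) atTop ≤
      liminf
        (fun lam : ℝ => ((discountedAggregate R lam / Real.log (1 / lam) : ℝ) : EReal))
        (nhdsWithin 0 (Set.Ioi 0))) ∧
    (∀ L : ℝ,
      (L : EReal) ≤ liminf (fun T : ℕ => ((R T / Real.log T : ℝ) : EReal)) atTop →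
      (L : EReal) ≤
        liminf
          (fun lam : ℝ => ((discountedAggregate R lam / Real.log (1 / lam) : ℝ) : EReal))
          (nhdsWithin 0 (Set.Ioi 0))) := by
  have hmain : liminf (fun T : ℕ => ((R T / Real.log T : ℝ) : EReal)) atTop ≤
      liminf
        (fun lam : ℝ => ((discountedAggregate R lam / Real.log (1 / lam) : ℝ) : EReal))
        (nhdsWithin 0 (Set.Ioi 0)) := by
    by_contra h
    push_neg at h
    obtain ⟨z, h1, h2⟩ := EReal.exists_between_coe_real h
    exact absurd (aux_z R c hc hnonneg hmono hlin z h2) (not_le.2 h1)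
  exact ⟨hmain, fun L hL => le_trans hL hmain⟩
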